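/- arXiv:2502.06967 — 7 statements merged into one kernel-verified Lean document; each statement's English description precedes it below -/
import Mathlib

section
/- Let c > 0 and let x₁ ≤ x₂ and z₁ ≤ z₂ be reals. Define F(x, z) = arctan( x·z / (c · √(c² + x² + z²)) ). Then ∫_{z₁}^{z₂} ∫_{x₁}^{x₂} c · (x² + z² + c²)^(−3/2) dx dz = F(x₂, z₂) − F(x₁, z₂) − F(x₂, z₁) + F(x₁, z₁). -/
/-- The corner function `F(x, z) = arctan( x·z / (c·√(c² + x² + z²)) )`. -/
noncomputable def solidAngleCorner (c x z : ℝ) : ℝ :=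
  Real.arctan (x * z / (c * Real.sqrt (c ^ 2 + x ^ 2 + z ^ 2)))



-- rpow rewrite
lemma rpow_neg_three_halves {t : ℝ} (ht : 0 < t) :
    t ^ (-(3:ℝ)/2) = 1 / (t * Real.sqrt t) := by
  have h32 : t ^ ((3:ℝ)/2) = t * Real.sqrt t := by
    have : ((3:ℝ)/2) = 1 + 1/2 := by norm_num
    rw [this, Real.rpow_add ht, Real.rpow_one, ← Real.sqrt_eq_rpow]
  rw [show (-(3:ℝ)/2) = -((3:ℝ)/2) by ring, Real.rpow_neg ht.le, h32, one_div]

lemma inner_deriv (c z x : ℝ) (hc : 0 < c) :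
    HasDerivAt (fun x => c * x / ((z^2+c^2) * Real.sqrt (x^2+z^2+c^2)))
      (c * (x^2+z^2+c^2) ^ (-(3:ℝ)/2)) x := by
  have hS : 0 < x^2+z^2+c^2 := by positivity
  have hA : 0 < z^2+c^2 := by positivity
  have hsS : 0 < Real.sqrt (x^2+z^2+c^2) := Real.sqrt_pos.2 hS
  have hsq : HasDerivAt (fun x : ℝ => x^2+z^2+c^2) (2*x) x := by
    simpa [add_assoc] using ((hasDerivAt_pow 2 x).add_const (z^2+c^2))
  have hsqrt : HasDerivAt (fun x : ℝ => Real.sqrt (x^2+z^2+c^2))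
      (1 / (2 * Real.sqrt (x^2+z^2+c^2)) * (2*x)) x :=
    (Real.hasDerivAt_sqrt hS.ne').comp x hsq
  have hden := hsqrt.const_mul (z^2+c^2)
  have hnum : HasDerivAt (fun x : ℝ => c * x) c x := by
    simpa using (hasDerivAt_id x).const_mul c
  have hne : (z^2+c^2) * Real.sqrt (x^2+z^2+c^2) ≠ 0 := by positivity
  have h := hnum.div hden hne
  convert h using 1
  · rfl
  · rfl
  · rfl
  rw [rpow_neg_three_halves hS]
  have hss : Real.sqrt (x^2+z^2+c^2) * Real.sqrt (x^2+z^2+c^2) = x^2+z^2+c^2 :=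
    Real.mul_self_sqrt hS.le
  set s := Real.sqrt (x^2+z^2+c^2) with hs
  field_simp
  linear_combination (-x^2) * hss

lemma corner_deriv (c x z : ℝ) (hc : 0 < c) :
    HasDerivAt (fun z => solidAngleCorner c x z)
      (c * x / ((z^2+c^2) * Real.sqrt (c^2+x^2+z^2))) z := by
  have hS : 0 < c^2+x^2+z^2 := by positivity
  have hsS : 0 < Real.sqrt (c^2+x^2+z^2) := Real.sqrt_pos.2 hS
  have hsq : HasDerivAt (fun z : ℝ => c^2+x^2+z^2) (2*z) z := by
    simpa using ((hasDerivAt_pow 2 z).const_add (c^2+x^2))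
  have hsqrt : HasDerivAt (fun z : ℝ => Real.sqrt (c^2+x^2+z^2))
      (1 / (2 * Real.sqrt (c^2+x^2+z^2)) * (2*z)) z :=
    (Real.hasDerivAt_sqrt hS.ne').comp z hsq
  have hden := hsqrt.const_mul c
  have hnum : HasDerivAt (fun z : ℝ => x * z) x z := by
    simpa using (hasDerivAt_id z).const_mul x
  have hne : c * Real.sqrt (c^2+x^2+z^2) ≠ 0 := by positivity
  have hu := hnum.div hden hne
  have h := hu.arctan
  have hss : Real.sqrt (c^2+x^2+z^2) * Real.sqrt (c^2+x^2+z^2) = c^2+x^2+z^2 :=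
    Real.mul_self_sqrt hS.le
  unfold solidAngleCorner
  convert h using 1
  · rfl
  simp only [Pi.div_apply]
  set s := Real.sqrt (c^2+x^2+z^2) with hs
  have hA : (0:ℝ) < z^2+c^2 := by positivity
  field_simp
  linear_combination (-x*z^2) * hss

lemma inner_integral (c z x₁ x₂ : ℝ) (hc : 0 < c) :
    ∫ x in x₁..x₂, c * (x^2+z^2+c^2) ^ (-(3:ℝ)/2)
      = c*x₂/((z^2+c^2)*Real.sqrt (x₂^2+z^2+c^2))
        - c*x₁/((z^2+c^2)*Real.sqrt (x₁^2+z^2+c^2)) := by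
  apply intervalIntegral.integral_eq_sub_of_hasDerivAt
  · intro x _
    exact inner_deriv c z x hc
  · apply ContinuousOn.intervalIntegrable
    have hcont : Continuous fun x : ℝ => c * (x^2+z^2+c^2) ^ (-(3:ℝ)/2) := by
      apply Continuous.mul continuous_const
      apply Continuous.rpow_const (by continuity)
      intro x
      left
      positivity
    exact hcont.continuousOn

/-- General signed-corner rectangle formula for the solid-angle double integral:
for `c > 0`, `x₁ ≤ x₂`, `z₁ ≤ z₂`,
`∫_{z₁}^{z₂} ∫_{x₁}^{x₂} c·(x² + z² + c²)^(−3/2) dx dz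
  = F(x₂,z₂) − F(x₁,z₂) − F(x₂,z₁) + F(x₁,z₁)`. -/
theorem double_integral_solid_angle_rect (c x₁ x₂ z₁ z₂ : ℝ)
    (hc : 0 < c) (hx : x₁ ≤ x₂) (hz : z₁ ≤ z₂) :
    ∫ z in z₁..z₂, ∫ x in x₁..x₂, c * (x ^ 2 + z ^ 2 + c ^ 2) ^ (-(3 : ℝ) / 2)
      = solidAngleCorner c x₂ z₂ - solidAngleCorner c x₁ z₂
        - solidAngleCorner c x₂ z₁ + solidAngleCorner c x₁ z₁ := by
  have hrw : ∀ z : ℝ, (∫ x in x₁..x₂, c * (x ^ 2 + z ^ 2 + c ^ 2) ^ (-(3 : ℝ) / 2))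
      = c*x₂/((z^2+c^2)*Real.sqrt (x₂^2+z^2+c^2))
        - c*x₁/((z^2+c^2)*Real.sqrt (x₁^2+z^2+c^2)) := fun z => inner_integral c z x₁ x₂ hc
  rw [intervalIntegral.integral_congr (g := fun z =>
      c*x₂/((z^2+c^2)*Real.sqrt (x₂^2+z^2+c^2))
        - c*x₁/((z^2+c^2)*Real.sqrt (x₁^2+z^2+c^2))) (fun z _ => hrw z)]
  have hcont : ∀ x : ℝ, Continuous fun z : ℝ => c*x/((z^2+c^2)*Real.sqrt (x^2+z^2+c^2)) := by
    intro x
    apply Continuous.div continuous_const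
    · exact (by continuity : Continuous fun z : ℝ => (z^2+c^2)).mul
        (Real.continuous_sqrt.comp (by continuity))
    · intro z
      positivity
  have key : ∫ z in z₁..z₂, (c*x₂/((z^2+c^2)*Real.sqrt (x₂^2+z^2+c^2))
        - c*x₁/((z^2+c^2)*Real.sqrt (x₁^2+z^2+c^2)))
      = (solidAngleCorner c x₂ z₂ - solidAngleCorner c x₁ z₂)
        - (solidAngleCorner c x₂ z₁ - solidAngleCorner c x₁ z₁) := by
    apply intervalIntegral.integral_eq_sub_of_hasDerivAt
    · intro z _
      have h := (corner_deriv c x₂ z hc).sub (corner_deriv c x₁ z hc)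
      rw [show x₂^2+z^2+c^2 = c^2+x₂^2+z^2 from by ring,
          show x₁^2+z^2+c^2 = c^2+x₁^2+z^2 from by ring]
      exact h
    · exact (((hcont x₂).sub (hcont x₁)).continuousOn).intervalIntegrable
  rw [key]
  ring
end

section
/- Let r > 0, θ ∈ (0, π), φ ∈ (0, π), L_x > 0, L_z > 0, η > 0, k₀ > 0, and set Φ = cos φ · sin θ, Ψ = sin φ · sin θ, Θ = cos θ. Then ∫_{−L_z/2}^{L_z/2} ∫_0^{L_x} (η² k₀² / (4π)) · r·Ψ · (x² + z² − 2r(Φ·x + Θ·z) + r²)^(−3/2) dx dz = (η² k₀² / (4π)) · Σ_{u ∈ {Φ, L_x/r − Φ}} Σ_{v ∈ {L_z/(2r) − Θ, L_z/(2r) + Θ}} arctan( u·v / (Ψ · √(Ψ² + u² + v²)) ). -/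
/-- The function `ζ(Ψ, u, v) = arctan( u·v / (Ψ·√(Ψ² + u² + v²)) )` from Theorem 1
of the paper. -/
noncomputable def zeta (Ψ u v : ℝ) : ℝ :=
  Real.arctan (u * v / (Ψ * Real.sqrt (Ψ ^ 2 + u ^ 2 + v ^ 2)))

lemma antider_inner (c : ℝ) (hc : 0 < c) (x : ℝ) :
    HasDerivAt (fun x : ℝ => x / (c * Real.sqrt (x ^ 2 + c)))
      (((x ^ 2 + c) * Real.sqrt (x ^ 2 + c))⁻¹) x := by
  have hQ : 0 < x ^ 2 + c := by positivity
  have h1 : HasDerivAt (fun x : ℝ => x ^ 2 + c) (2 * x) x := by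
    simpa using (hasDerivAt_pow 2 x).add_const c
  have h2 := h1.sqrt hQ.ne'
  have hs : 0 < Real.sqrt (x ^ 2 + c) := Real.sqrt_pos.mpr hQ
  have h3 : HasDerivAt (fun x : ℝ => c * Real.sqrt (x ^ 2 + c))
      (c * (2 * x / (2 * Real.sqrt (x ^ 2 + c)))) x := h2.const_mul c
  have h4 := (hasDerivAt_id x).div h3 (by positivity)
  refine h4.congr_deriv ?_
  simp only [id]
  have hs2 : Real.sqrt (x ^ 2 + c) ^ 2 = x ^ 2 + c := Real.sq_sqrt hQ.le
  field_simp
  linear_combination x ^ 2 * hs2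

lemma antider_outer (a x : ℝ) (ha : 0 < a) (z : ℝ) :
    HasDerivAt
      (fun z : ℝ => Real.arctan (x * z / (a * Real.sqrt (x ^ 2 + z ^ 2 + a ^ 2))) / a)
      (x / ((z ^ 2 + a ^ 2) * Real.sqrt (x ^ 2 + (z ^ 2 + a ^ 2)))) z := by
  have hS : 0 < x ^ 2 + z ^ 2 + a ^ 2 := by positivity
  have hs : 0 < Real.sqrt (x ^ 2 + z ^ 2 + a ^ 2) := Real.sqrt_pos.mpr hS
  have hs2 : Real.sqrt (x ^ 2 + z ^ 2 + a ^ 2) ^ 2 = x ^ 2 + z ^ 2 + a ^ 2 :=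
    Real.sq_sqrt hS.le
  have h1 : HasDerivAt (fun z : ℝ => x ^ 2 + z ^ 2 + a ^ 2) (2 * z) z := by
    simpa using (((hasDerivAt_pow 2 z).const_add (x ^ 2)).add_const (a ^ 2))
  have h2 := h1.sqrt hS.ne'
  have h3 : HasDerivAt (fun z : ℝ => a * Real.sqrt (x ^ 2 + z ^ 2 + a ^ 2))
      (a * (2 * z / (2 * Real.sqrt (x ^ 2 + z ^ 2 + a ^ 2)))) z := h2.const_mul a
  have h4 : HasDerivAt (fun z : ℝ => x * z) (x * 1) z := (hasDerivAt_id z).const_mul x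
  have h5 := h4.div h3 (by positivity)
  have h6 := h5.arctan
  have h7 := h6.div_const a
  refine h7.congr_deriv ?_
  simp only [Pi.div_apply]
  set s := Real.sqrt (x ^ 2 + z ^ 2 + a ^ 2) with hsdef
  rw [show x ^ 2 + (z ^ 2 + a ^ 2) = x ^ 2 + z ^ 2 + a ^ 2 by ring, ← hsdef]
  field_simp
  linear_combination x * z ^ 2 * hs2

lemma rect (a : ℝ) (ha : 0 < a) (x1 x2 z1 z2 : ℝ) :
    (∫ z in z1..z2, ∫ x in x1..x2,
        ((x ^ 2 + z ^ 2 + a ^ 2) * Real.sqrt (x ^ 2 + z ^ 2 + a ^ 2))⁻¹)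
      = (Real.arctan (x2 * z2 / (a * Real.sqrt (x2 ^ 2 + z2 ^ 2 + a ^ 2)))
          - Real.arctan (x1 * z2 / (a * Real.sqrt (x1 ^ 2 + z2 ^ 2 + a ^ 2)))
          - Real.arctan (x2 * z1 / (a * Real.sqrt (x2 ^ 2 + z1 ^ 2 + a ^ 2)))
          + Real.arctan (x1 * z1 / (a * Real.sqrt (x1 ^ 2 + z1 ^ 2 + a ^ 2)))) / a := by
  have hinner : ∀ z : ℝ,
      (∫ x in x1..x2, ((x ^ 2 + z ^ 2 + a ^ 2) * Real.sqrt (x ^ 2 + z ^ 2 + a ^ 2))⁻¹)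
        = x2 / ((z ^ 2 + a ^ 2) * Real.sqrt (x2 ^ 2 + (z ^ 2 + a ^ 2)))
          - x1 / ((z ^ 2 + a ^ 2) * Real.sqrt (x1 ^ 2 + (z ^ 2 + a ^ 2))) := by
    intro z
    have hc : 0 < z ^ 2 + a ^ 2 := by positivity
    have hcont : Continuous fun x : ℝ =>
        ((x ^ 2 + (z ^ 2 + a ^ 2)) * Real.sqrt (x ^ 2 + (z ^ 2 + a ^ 2)))⁻¹ := by
      apply Continuous.inv₀
      · fun_prop
      · intro x
        have h1 : 0 < x ^ 2 + (z ^ 2 + a ^ 2) := by positivity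
        positivity
    have := intervalIntegral.integral_eq_sub_of_hasDerivAt
      (f := fun x : ℝ => x / ((z ^ 2 + a ^ 2) * Real.sqrt (x ^ 2 + (z ^ 2 + a ^ 2))))
      (f' := fun x : ℝ => ((x ^ 2 + (z ^ 2 + a ^ 2)) * Real.sqrt (x ^ 2 + (z ^ 2 + a ^ 2)))⁻¹)
      (fun x _ => antider_inner (z ^ 2 + a ^ 2) hc x)
      (hcont.intervalIntegrable x1 x2)
    simpa [add_assoc] using this
  have contF : ∀ x0 : ℝ, Continuous fun z : ℝ =>
      x0 / ((z ^ 2 + a ^ 2) * Real.sqrt (x0 ^ 2 + (z ^ 2 + a ^ 2))) := by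
    intro x0
    apply Continuous.div continuous_const
    · fun_prop
    · intro z
      have h1 : 0 < z ^ 2 + a ^ 2 := by positivity
      have h2 : 0 < x0 ^ 2 + (z ^ 2 + a ^ 2) := by positivity
      positivity
  have hFTC : ∀ x0 : ℝ,
      (∫ z in z1..z2, x0 / ((z ^ 2 + a ^ 2) * Real.sqrt (x0 ^ 2 + (z ^ 2 + a ^ 2))))
        = Real.arctan (x0 * z2 / (a * Real.sqrt (x0 ^ 2 + z2 ^ 2 + a ^ 2))) / a
          - Real.arctan (x0 * z1 / (a * Real.sqrt (x0 ^ 2 + z1 ^ 2 + a ^ 2))) / a := by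
    intro x0
    exact intervalIntegral.integral_eq_sub_of_hasDerivAt
      (fun z _ => antider_outer a x0 ha z)
      ((contF x0).intervalIntegrable z1 z2)
  rw [intervalIntegral.integral_congr (g := fun z : ℝ =>
      x2 / ((z ^ 2 + a ^ 2) * Real.sqrt (x2 ^ 2 + (z ^ 2 + a ^ 2)))
        - x1 / ((z ^ 2 + a ^ 2) * Real.sqrt (x1 ^ 2 + (z ^ 2 + a ^ 2))))
      (fun z _ => hinner z)]
  rw [intervalIntegral.integral_sub ((contF x2).intervalIntegrable z1 z2)
      ((contF x1).intervalIntegrable z1 z2), hFTC x2, hFTC x1]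
  ring

lemma zeta_scale (r Ψ : ℝ) (hr : 0 < r) (hΨ : 0 < Ψ) (u v : ℝ) :
    Real.arctan ((r * u) * (r * v) /
      ((r * Ψ) * Real.sqrt ((r * u) ^ 2 + (r * v) ^ 2 + (r * Ψ) ^ 2))) = zeta Ψ u v := by
  unfold zeta
  congr 1
  have h : (r * u) ^ 2 + (r * v) ^ 2 + (r * Ψ) ^ 2 = r ^ 2 * (Ψ ^ 2 + u ^ 2 + v ^ 2) := by ring
  rw [h, Real.sqrt_mul (sq_nonneg r), Real.sqrt_sq hr.le]
  have hs : 0 < Real.sqrt (Ψ ^ 2 + u ^ 2 + v ^ 2) := Real.sqrt_pos.mpr (by positivity)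
  field_simp

lemma zeta_neg_left (Ψ u v : ℝ) : zeta Ψ (-u) v = -zeta Ψ u v := by
  unfold zeta
  rw [show (-u) ^ 2 = u ^ 2 by ring, show -u * v = -(u * v) by ring, neg_div,
    Real.arctan_neg]

lemma zeta_neg_right (Ψ u v : ℝ) : zeta Ψ u (-v) = -zeta Ψ u v := by
  unfold zeta
  rw [show (-v) ^ 2 = v ^ 2 by ring, show u * -v = -(u * v) by ring, neg_div,
    Real.arctan_neg]

set_option maxHeartbeats 1000000 in
/-- Theorem 1 of the paper: the closed-form downlink channel gain
`g_d = ∫_{A_t} |h_d(t)|² dt` over the transmit aperture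
`A_t = [0, L_x] × [−L_z/2, L_z/2]`, where
`|h_d(t)|² = (η²k₀²/(4π)) · rΨ · (x² + z² − 2r(Φx + Θz) + r²)^{-3/2}` and
`Φ = cos φ sin θ`, `Ψ = sin φ sin θ`, `Θ = cos θ`. -/
theorem downlink_channel_gain_closed_form
    (r θ φ Lx Lz η k₀ Φ Ψ Θ : ℝ)
    (hr : 0 < r) (hθ : θ ∈ Set.Ioo 0 Real.pi) (hφ : φ ∈ Set.Ioo 0 Real.pi)
    (hLx : 0 < Lx) (hLz : 0 < Lz) (hη : 0 < η) (hk : 0 < k₀)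
    (hΦ : Φ = Real.cos φ * Real.sin θ) (hΨ : Ψ = Real.sin φ * Real.sin θ)
    (hΘ : Θ = Real.cos θ) :
    ∫ z in (-(Lz / 2))..(Lz / 2), ∫ x in (0 : ℝ)..Lx,
        η ^ 2 * k₀ ^ 2 / (4 * Real.pi) * (r * Ψ) *
          (x ^ 2 + z ^ 2 - 2 * r * (Φ * x + Θ * z) + r ^ 2) ^ (-(3 : ℝ) / 2)
      = η ^ 2 * k₀ ^ 2 / (4 * Real.pi) *
          (zeta Ψ Φ (Lz / (2 * r) - Θ) + zeta Ψ Φ (Lz / (2 * r) + Θ)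
            + zeta Ψ (Lx / r - Φ) (Lz / (2 * r) - Θ)
            + zeta Ψ (Lx / r - Φ) (Lz / (2 * r) + Θ)) := by
  have hΨpos : 0 < Ψ := by
    rw [hΨ]
    exact mul_pos (Real.sin_pos_of_pos_of_lt_pi hφ.1 hφ.2)
      (Real.sin_pos_of_pos_of_lt_pi hθ.1 hθ.2)
  have ha : 0 < r * Ψ := mul_pos hr hΨpos
  have hsum : Φ ^ 2 + Ψ ^ 2 + Θ ^ 2 = 1 := by
    rw [hΦ, hΨ, hΘ]
    nlinarith [Real.sin_sq_add_cos_sq θ, Real.sin_sq_add_cos_sq φ]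
  set C : ℝ := η ^ 2 * k₀ ^ 2 / (4 * Real.pi) with hC
  have hQ : ∀ x z : ℝ, x ^ 2 + z ^ 2 - 2 * r * (Φ * x + Θ * z) + r ^ 2
      = (x - r * Φ) ^ 2 + (z - r * Θ) ^ 2 + (r * Ψ) ^ 2 := by
    intro x z
    linear_combination (-r ^ 2) * hsum
  have hrpow : ∀ t : ℝ, 0 < t → t ^ (-(3 : ℝ) / 2) = (t * Real.sqrt t)⁻¹ := by
    intro t ht
    rw [show (-(3 : ℝ) / 2) = -((3 : ℝ) / 2) by ring, Real.rpow_neg ht.le]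
    congr 1
    rw [show (3 : ℝ) / 2 = 1 + 1 / 2 by ring, Real.rpow_add ht, Real.rpow_one,
      ← Real.sqrt_eq_rpow]
  calc
    (∫ z in (-(Lz / 2))..(Lz / 2), ∫ x in (0 : ℝ)..Lx,
        C * (r * Ψ) *
          (x ^ 2 + z ^ 2 - 2 * r * (Φ * x + Θ * z) + r ^ 2) ^ (-(3 : ℝ) / 2))
      = ∫ z in (-(Lz / 2))..(Lz / 2), ∫ x in (0 : ℝ)..Lx,
          (C * (r * Ψ)) *
            (((x - r * Φ) ^ 2 + (z - r * Θ) ^ 2 + (r * Ψ) ^ 2) *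
              Real.sqrt ((x - r * Φ) ^ 2 + (z - r * Θ) ^ 2 + (r * Ψ) ^ 2))⁻¹ := by
        apply intervalIntegral.integral_congr
        intro z _
        apply intervalIntegral.integral_congr
        intro x _
        simp only
        rw [hQ x z, hrpow _ (by positivity)]
    _ = (C * (r * Ψ)) * ∫ z in (-(Lz / 2))..(Lz / 2), ∫ x in (0 : ℝ)..Lx,
            (((x - r * Φ) ^ 2 + (z - r * Θ) ^ 2 + (r * Ψ) ^ 2) *
              Real.sqrt ((x - r * Φ) ^ 2 + (z - r * Θ) ^ 2 + (r * Ψ) ^ 2))⁻¹ := by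
        simp only [intervalIntegral.integral_const_mul]
    _ = (C * (r * Ψ)) * ∫ z in (-(Lz / 2))..(Lz / 2),
          ∫ X in (0 - r * Φ)..(Lx - r * Φ),
            ((X ^ 2 + (z - r * Θ) ^ 2 + (r * Ψ) ^ 2) *
              Real.sqrt (X ^ 2 + (z - r * Θ) ^ 2 + (r * Ψ) ^ 2))⁻¹ := by
        congr 1
        apply intervalIntegral.integral_congr
        intro z _
        exact intervalIntegral.integral_comp_sub_right
          (fun X : ℝ => ((X ^ 2 + (z - r * Θ) ^ 2 + (r * Ψ) ^ 2) *
            Real.sqrt (X ^ 2 + (z - r * Θ) ^ 2 + (r * Ψ) ^ 2))⁻¹) (r * Φ)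
    _ = (C * (r * Ψ)) * ∫ Z in (-(Lz / 2) - r * Θ)..(Lz / 2 - r * Θ),
          ∫ X in (0 - r * Φ)..(Lx - r * Φ),
            ((X ^ 2 + Z ^ 2 + (r * Ψ) ^ 2) *
              Real.sqrt (X ^ 2 + Z ^ 2 + (r * Ψ) ^ 2))⁻¹ := by
        congr 1
        exact intervalIntegral.integral_comp_sub_right
          (fun Z : ℝ => ∫ X in (0 - r * Φ)..(Lx - r * Φ),
            ((X ^ 2 + Z ^ 2 + (r * Ψ) ^ 2) *
              Real.sqrt (X ^ 2 + Z ^ 2 + (r * Ψ) ^ 2))⁻¹) (r * Θ)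
    _ = (C * (r * Ψ)) *
          ((zeta Ψ (Lx / r - Φ) (Lz / (2 * r) - Θ)
            - (-zeta Ψ Φ (Lz / (2 * r) - Θ))
            - (-zeta Ψ (Lx / r - Φ) (Lz / (2 * r) + Θ))
            + zeta Ψ Φ (Lz / (2 * r) + Θ)) / (r * Ψ)) := by
        have hT1 : Real.arctan ((Lx - r * Φ) * (Lz / 2 - r * Θ) /
            ((r * Ψ) * Real.sqrt ((Lx - r * Φ) ^ 2 + (Lz / 2 - r * Θ) ^ 2 + (r * Ψ) ^ 2)))
            = zeta Ψ (Lx / r - Φ) (Lz / (2 * r) - Θ) := by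
          rw [show Lx - r * Φ = r * (Lx / r - Φ) by field_simp,
            show Lz / 2 - r * Θ = r * (Lz / (2 * r) - Θ) by field_simp]
          exact zeta_scale r Ψ hr hΨpos _ _
        have hT2 : Real.arctan ((0 - r * Φ) * (Lz / 2 - r * Θ) /
            ((r * Ψ) * Real.sqrt ((0 - r * Φ) ^ 2 + (Lz / 2 - r * Θ) ^ 2 + (r * Ψ) ^ 2)))
            = -zeta Ψ Φ (Lz / (2 * r) - Θ) := by
          rw [show (0 : ℝ) - r * Φ = r * (-Φ) by ring,
            show Lz / 2 - r * Θ = r * (Lz / (2 * r) - Θ) by field_simp,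
            zeta_scale r Ψ hr hΨpos _ _, zeta_neg_left]
        have hT3 : Real.arctan ((Lx - r * Φ) * (-(Lz / 2) - r * Θ) /
            ((r * Ψ) * Real.sqrt ((Lx - r * Φ) ^ 2 + (-(Lz / 2) - r * Θ) ^ 2 + (r * Ψ) ^ 2)))
            = -zeta Ψ (Lx / r - Φ) (Lz / (2 * r) + Θ) := by
          rw [show Lx - r * Φ = r * (Lx / r - Φ) by field_simp,
            show -(Lz / 2) - r * Θ = r * (-(Lz / (2 * r) + Θ)) by field_simp; ring,
            zeta_scale r Ψ hr hΨpos _ _, zeta_neg_right]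
        have hT4 : Real.arctan ((0 - r * Φ) * (-(Lz / 2) - r * Θ) /
            ((r * Ψ) * Real.sqrt ((0 - r * Φ) ^ 2 + (-(Lz / 2) - r * Θ) ^ 2 + (r * Ψ) ^ 2)))
            = zeta Ψ Φ (Lz / (2 * r) + Θ) := by
          rw [show (0 : ℝ) - r * Φ = r * (-Φ) by ring,
            show -(Lz / 2) - r * Θ = r * (-(Lz / (2 * r) + Θ)) by field_simp; ring,
            zeta_scale r Ψ hr hΨpos _ _, zeta_neg_left, zeta_neg_right, neg_neg]
        rw [rect (r * Ψ) ha (0 - r * Φ) (Lx - r * Φ) (-(Lz / 2) - r * Θ) (Lz / 2 - r * Θ),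
          hT1, hT2, hT3, hT4]
    _ = C * (zeta Ψ Φ (Lz / (2 * r) - Θ) + zeta Ψ Φ (Lz / (2 * r) + Θ)
          + zeta Ψ (Lx / r - Φ) (Lz / (2 * r) - Θ)
          + zeta Ψ (Lx / r - Φ) (Lz / (2 * r) + Θ)) := by
        field_simp
        ring
end

section
/- Let H be a complex inner product space, let h, a ∈ H with h ≠ 0, set ρ = ⟪h, a⟫, and let ε ∈ (0, 1) satisfy ε · (‖h‖⁴ + |ρ|²) ≥ ‖h‖⁴. Then ‖h‖²/ε is the greatest element of the set { min( |⟪h, w⟫|²/ε , |⟪a, w⟫|²/(1 − ε) ) : w ∈ H, ‖w‖ ≤ 1 }, and it is attained at w = h / ‖h‖. -/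
open scoped InnerProductSpace

/-- First case of Lemma 2 of the paper: if `ε·(‖h‖⁴ + |ρ|²) ≥ ‖h‖⁴` (with
`ρ = ⟪h, a⟫`), then `‖h‖²/ε` is the greatest element of the set of values
`min(|⟪h,w⟫|²/ε, |⟪a,w⟫|²/(1−ε))` over `‖w‖ ≤ 1`, attained at the
communications-centric beamformer `w = h/‖h‖`. -/
theorem pareto_case_comm_centric {H : Type*} [NormedAddCommGroup H]
    [InnerProductSpace ℂ H] (h a : H) (hh : h ≠ 0) (ρ : ℂ) (hρ : ρ = ⟪h, a⟫_ℂ)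
    (ε : ℝ) (hε : ε ∈ Set.Ioo (0 : ℝ) 1)
    (hcase : ε * (‖h‖ ^ 4 + ‖ρ‖ ^ 2) ≥ ‖h‖ ^ 4) :
    IsGreatest {x : ℝ | ∃ w : H, ‖w‖ ≤ 1 ∧
        x = min (‖⟪h, w⟫_ℂ‖ ^ 2 / ε) (‖⟪a, w⟫_ℂ‖ ^ 2 / (1 - ε))} (‖h‖ ^ 2 / ε)
      ∧ min (‖⟪h, ((‖h‖ : ℂ))⁻¹ • h⟫_ℂ‖ ^ 2 / ε)
          (‖⟪a, ((‖h‖ : ℂ))⁻¹ • h⟫_ℂ‖ ^ 2 / (1 - ε)) = ‖h‖ ^ 2 / ε := by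
  obtain ⟨hε0, hε1⟩ := hε
  have hhn : (0 : ℝ) < ‖h‖ := norm_pos_iff.mpr hh
  have h1 : ‖⟪h, ((‖h‖ : ℂ))⁻¹ • h⟫_ℂ‖ = ‖h‖ := by
    rw [inner_smul_right, norm_mul, inner_self_eq_norm_sq_to_K]
    simp [abs_of_pos hhn]
    field_simp
  have h2 : ‖⟪a, ((‖h‖ : ℂ))⁻¹ • h⟫_ℂ‖ = ‖h‖⁻¹ * ‖ρ‖ := by
    rw [inner_smul_right, norm_mul, hρ, norm_inner_symm a h]
    simp [abs_of_pos hhn]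
  have key : min (‖⟪h, ((‖h‖ : ℂ))⁻¹ • h⟫_ℂ‖ ^ 2 / ε)
          (‖⟪a, ((‖h‖ : ℂ))⁻¹ • h⟫_ℂ‖ ^ 2 / (1 - ε)) = ‖h‖ ^ 2 / ε := by
    rw [h1, h2]
    apply min_eq_left
    rw [div_le_div_iff₀ hε0 (by linarith)]
    have : ε * ‖ρ‖ ^ 2 ≥ (1 - ε) * ‖h‖ ^ 4 := by nlinarith
    have hinv : ((‖h‖⁻¹ * ‖ρ‖) ^ 2) * ‖h‖ ^ 2 = ‖ρ‖ ^ 2 := by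
      field_simp
    nlinarith [sq_nonneg (‖h‖⁻¹ * ‖ρ‖), mul_pos hhn hhn]
  refine ⟨⟨⟨((‖h‖ : ℂ))⁻¹ • h, ?_, key.symm⟩, ?_⟩, key⟩
  · rw [norm_smul]
    simp [abs_of_pos hhn]
    rw [inv_mul_cancel₀ hhn.ne']
  · rintro x ⟨w, hw, rfl⟩
    have hcs : ‖⟪h, w⟫_ℂ‖ ≤ ‖h‖ := by
      calc ‖⟪h, w⟫_ℂ‖ ≤ ‖h‖ * ‖w‖ := norm_inner_le_norm h w
        _ ≤ ‖h‖ * 1 := by nlinarith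
        _ = ‖h‖ := mul_one _
    refine le_trans (min_le_left _ _) ((div_le_div_iff_of_pos_right hε0).mpr ?_)
    nlinarith [norm_nonneg (⟪h, w⟫_ℂ)]
end

section
/- Let H be a complex inner product space, let h, a ∈ H with a ≠ 0, set ρ = ⟪h, a⟫, and let ε ∈ (0, 1) satisfy ε · (|ρ|² + ‖a‖⁴) ≤ |ρ|². Then ‖a‖²/(1 − ε) is the greatest element of the set { min( |⟪h, w⟫|²/ε , |⟪a, w⟫|²/(1 − ε) ) : w ∈ H, ‖w‖ ≤ 1 }, and it is attained at w = a / ‖a‖. -/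
open scoped InnerProductSpace

/-- Second case of Lemma 2 of the paper: if `ε·(|ρ|² + ‖a‖⁴) ≤ |ρ|²` (with
`ρ = ⟪h, a⟫`), then `‖a‖²/(1−ε)` is the greatest element of the set of values
`min(|⟪h,w⟫|²/ε, |⟪a,w⟫|²/(1−ε))` over `‖w‖ ≤ 1`, attained at the
sensing-centric beamformer `w = a/‖a‖`. -/
theorem pareto_case_sensing_centric {H : Type*} [NormedAddCommGroup H]
    [InnerProductSpace ℂ H] (h a : H) (ha : a ≠ 0) (ρ : ℂ) (hρ : ρ = ⟪h, a⟫_ℂ)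
    (ε : ℝ) (hε : ε ∈ Set.Ioo (0 : ℝ) 1)
    (hcase : ε * (‖ρ‖ ^ 2 + ‖a‖ ^ 4) ≤ ‖ρ‖ ^ 2) :
    IsGreatest {x : ℝ | ∃ w : H, ‖w‖ ≤ 1 ∧
        x = min (‖⟪h, w⟫_ℂ‖ ^ 2 / ε) (‖⟪a, w⟫_ℂ‖ ^ 2 / (1 - ε))} (‖a‖ ^ 2 / (1 - ε))
      ∧ min (‖⟪h, ((‖a‖ : ℂ))⁻¹ • a⟫_ℂ‖ ^ 2 / ε)
          (‖⟪a, ((‖a‖ : ℂ))⁻¹ • a⟫_ℂ‖ ^ 2 / (1 - ε)) = ‖a‖ ^ 2 / (1 - ε) := by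
  obtain ⟨hε0, hε1⟩ := hε
  have h1ε : (0:ℝ) < 1 - ε := by linarith
  have hna : (0:ℝ) < ‖a‖ := norm_pos_iff.mpr ha
  have hnac : ((‖a‖ : ℂ)) ≠ 0 := by
    exact_mod_cast ne_of_gt hna
  -- inner product computations at the attaining point
  have hia : ‖⟪a, ((‖a‖ : ℂ))⁻¹ • a⟫_ℂ‖ = ‖a‖ := by
    rw [inner_smul_right, inner_self_eq_norm_sq_to_K]
    simp [norm_inv, hna.le]
    rw [pow_two, ← mul_assoc, inv_mul_cancel₀ (ne_of_gt hna), one_mul]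
  have hih : ‖⟪h, ((‖a‖ : ℂ))⁻¹ • a⟫_ℂ‖ = ‖a‖⁻¹ * ‖ρ‖ := by
    rw [inner_smul_right, norm_mul, hρ]
    simp
  have key : ‖a‖ ^ 2 / (1 - ε) ≤ ‖⟪h, ((‖a‖ : ℂ))⁻¹ • a⟫_ℂ‖ ^ 2 / ε := by
    rw [hih, mul_pow, div_le_div_iff₀ h1ε hε0]
    have hcase' : ε * ‖a‖ ^ 4 ≤ (1 - ε) * ‖ρ‖ ^ 2 := by nlinarith
    calc ‖a‖ ^ 2 * ε = (ε * ‖a‖ ^ 4) * (‖a‖⁻¹ ^ 2) := by field_simp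
      _ ≤ ((1 - ε) * ‖ρ‖ ^ 2) * (‖a‖⁻¹ ^ 2) :=
          mul_le_mul_of_nonneg_right hcase' (by positivity)
      _ = ‖a‖⁻¹ ^ 2 * ‖ρ‖ ^ 2 * (1 - ε) := by ring
  have hattain : min (‖⟪h, ((‖a‖ : ℂ))⁻¹ • a⟫_ℂ‖ ^ 2 / ε)
      (‖⟪a, ((‖a‖ : ℂ))⁻¹ • a⟫_ℂ‖ ^ 2 / (1 - ε)) = ‖a‖ ^ 2 / (1 - ε) := by
    rw [hia, min_eq_right key]
  refine ⟨⟨⟨((‖a‖ : ℂ))⁻¹ • a, ?_, hattain.symm⟩, ?_⟩, hattain⟩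
  · rw [norm_smul]
    simp [ne_of_gt hna]
  · rintro x ⟨w, hw, rfl⟩
    refine le_trans (min_le_right _ _) ?_
    gcongr ?_ / _
    calc ‖⟪a, w⟫_ℂ‖ ^ 2 ≤ (‖a‖ * ‖w‖) ^ 2 := by
          apply pow_le_pow_left₀ (norm_nonneg _) (norm_inner_le_norm a w)
      _ ≤ ‖a‖ ^ 2 := by
          have hw2 : ‖w‖ ^ 2 ≤ 1 := by nlinarith [norm_nonneg w]
          nlinarith [sq_nonneg ‖a‖]
end

section
/- Let H be a complex inner product space, let a, h ∈ H, and let γ ≥ 0 be real. Then for every v ∈ H, |⟪a, v⟫|² ≤ ( ‖a‖² − γ·|⟪h, a⟫|²/(1 + γ·‖h‖²) ) · ( γ·|⟪h, v⟫|² + ‖v‖² ). -/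
open scoped InnerProductSpace
open Complex

/-- Upper-bound half of Lemma 3 of the paper: for all `v`,
`|⟪a,v⟫|² ≤ (‖a‖² − γ|⟪h,a⟫|²/(1+γ‖h‖²))·(γ|⟪h,v⟫|² + ‖v‖²)`. -/
theorem rayleigh_quotient_upper_bound {H : Type*} [NormedAddCommGroup H]
    [InnerProductSpace ℂ H] (a h : H) (γ : ℝ) (hγ : 0 ≤ γ) :
    ∀ v : H, ‖⟪a, v⟫_ℂ‖ ^ 2
      ≤ (‖a‖ ^ 2 - γ * ‖⟪h, a⟫_ℂ‖ ^ 2 / (1 + γ * ‖h‖ ^ 2))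
          * (γ * ‖⟪h, v⟫_ℂ‖ ^ 2 + ‖v‖ ^ 2) := by
  intro v
  have hDpos : (0:ℝ) < 1 + γ * ‖h‖ ^ 2 := by positivity
  set D : ℝ := 1 + γ * ‖h‖ ^ 2 with hD
  have hDne : (D:ℂ) ≠ 0 := by exact_mod_cast hDpos.ne'
  set c : ℂ := ((γ / D : ℝ) : ℂ) * ⟪h, a⟫_ℂ with hc
  set w : H := a - c • h with hw
  have hconj : (starRingEnd ℂ) c = ((γ / D : ℝ) : ℂ) * ⟪a, h⟫_ℂ := by
    simp [hc, inner_conj_symm]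
  have hwh : ⟪w, h⟫_ℂ = ((1 / D : ℝ) : ℂ) * ⟪a, h⟫_ℂ := by
    have hhh : ⟪h, h⟫_ℂ = ((‖h‖^2 : ℝ) : ℂ) := by
      rw [inner_self_eq_norm_sq_to_K]; norm_cast
    rw [hw, inner_sub_left, inner_smul_left, hconj, hhh]
    rw [hD] at hDne ⊢; push_cast at hDne ⊢
    field_simp
    ring
  have key : ∀ u : H, ⟪a, u⟫_ℂ = ⟪w, u⟫_ℂ + (γ:ℂ) * ⟪w, h⟫_ℂ * ⟪h, u⟫_ℂ := by
    intro u
    rw [hwh, hw, inner_sub_left, inner_smul_left, hconj]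
    field_simp
    push_cast; ring
  -- energy identity
  have hmc : ∀ z : ℂ, z * (starRingEnd ℂ) z = ((‖z‖^2 : ℝ) : ℂ) := by
    intro z
    rw [Complex.mul_conj]
    norm_cast
    rw [Complex.normSq_eq_norm_sq]
  have h2 : ⟪a, w⟫_ℂ = ((‖a‖^2 - γ/D * ‖⟪h,a⟫_ℂ‖^2 : ℝ) : ℂ) := by
    rw [hw, inner_sub_right, inner_smul_right, hc, inner_self_eq_norm_sq_to_K,
      ← inner_conj_symm a h, mul_assoc, hmc]
    push_cast
    rfl
  have h3 : ⟪a, w⟫_ℂ = ((‖w‖^2 + γ * ‖⟪w,h⟫_ℂ‖^2 : ℝ) : ℂ) := by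
    rw [key w, ← inner_conj_symm h w, inner_self_eq_norm_sq_to_K, mul_assoc, hmc]
    push_cast
    rfl
  have hE : ‖a‖^2 - γ * ‖⟪h,a⟫_ℂ‖^2 / D = ‖w‖^2 + γ * ‖⟪w,h⟫_ℂ‖^2 := by
    have h4 := Complex.ofReal_injective (h2.symm.trans h3)
    rw [div_mul_eq_mul_div] at h4
    exact h4
  rw [hE]
  -- Cauchy–Schwarz steps
  have hav : ‖⟪a, v⟫_ℂ‖ ≤ ‖w‖ * ‖v‖ + γ * ‖⟪w,h⟫_ℂ‖ * ‖⟪h,v⟫_ℂ‖ := by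
    rw [key v]
    calc ‖⟪w, v⟫_ℂ + (γ:ℂ) * ⟪w, h⟫_ℂ * ⟪h, v⟫_ℂ‖
        ≤ ‖⟪w, v⟫_ℂ‖ + ‖(γ:ℂ) * ⟪w, h⟫_ℂ * ⟪h, v⟫_ℂ‖ := norm_add_le _ _
      _ = ‖⟪w, v⟫_ℂ‖ + γ * ‖⟪w, h⟫_ℂ‖ * ‖⟪h, v⟫_ℂ‖ := by
          rw [norm_mul, norm_mul, Complex.norm_real, Real.norm_eq_abs,
            _root_.abs_of_nonneg hγ]
      _ ≤ ‖w‖ * ‖v‖ + γ * ‖⟪w, h⟫_ℂ‖ * ‖⟪h, v⟫_ℂ‖ := by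
          have := norm_inner_le_norm (𝕜 := ℂ) w v
          linarith
  have h0 : (0:ℝ) ≤ ‖⟪a, v⟫_ℂ‖ := norm_nonneg _
  nlinarith [sq_nonneg (‖w‖ * ‖⟪h,v⟫_ℂ‖ - ‖⟪w,h⟫_ℂ‖ * ‖v‖),
    mul_nonneg (norm_nonneg w) (norm_nonneg v),
    mul_nonneg (mul_nonneg hγ (norm_nonneg (⟪w,h⟫_ℂ))) (norm_nonneg (⟪h,v⟫_ℂ)),
    norm_nonneg w, norm_nonneg v, norm_nonneg (⟪w,h⟫_ℂ), norm_nonneg (⟪h,v⟫_ℂ)]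
end

section
/- Let H be a complex inner product space, let a, h ∈ H with a ≠ 0, and let γ ≥ 0 be real. Set M = ‖a‖² − γ·|⟪h, a⟫|²/(1 + γ·‖h‖²) and v★ = a − (γ·⟪h, a⟫/(1 + γ·‖h‖²))·h. Then M is the greatest element of the set { |⟪a, v⟫|² / (γ·|⟪h, v⟫|² + ‖v‖²) : v ∈ H, v ≠ 0 }, and it is attained at v = v★. -/
open scoped InnerProductSpace

/-- Lemma 3 of the paper in full: the generalized Rayleigh quotient
`|⟪a,v⟫|² / (γ|⟪h,v⟫|² + ‖v‖²)` over nonzero `v` attains its greatest value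
`M = ‖a‖² − γ|⟪h,a⟫|²/(1+γ‖h‖²)` at the detector `v★ = a − (γ⟪h,a⟫/(1+γ‖h‖²))·h`. -/
theorem rayleigh_quotient_max {H : Type*} [NormedAddCommGroup H]
    [InnerProductSpace ℂ H] (a h : H) (ha : a ≠ 0) (γ : ℝ) (hγ : 0 ≤ γ) :
    IsGreatest {x : ℝ | ∃ v : H, v ≠ 0 ∧
        x = ‖⟪a, v⟫_ℂ‖ ^ 2 / (γ * ‖⟪h, v⟫_ℂ‖ ^ 2 + ‖v‖ ^ 2)}
      (‖a‖ ^ 2 - γ * ‖⟪h, a⟫_ℂ‖ ^ 2 / (1 + γ * ‖h‖ ^ 2))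
      ∧ (let vstar : H := a - ((γ : ℂ) * ⟪h, a⟫_ℂ / (1 + (γ : ℂ) * ((‖h‖ : ℂ)) ^ 2)) • h
         ‖⟪a, vstar⟫_ℂ‖ ^ 2 / (γ * ‖⟪h, vstar⟫_ℂ‖ ^ 2 + ‖vstar‖ ^ 2)
           = ‖a‖ ^ 2 - γ * ‖⟪h, a⟫_ℂ‖ ^ 2 / (1 + γ * ‖h‖ ^ 2)) := by
  have hconj : ∀ z : ℂ, (starRingEnd ℂ) z * z = ((‖z‖^2 : ℝ) : ℂ) := by
    intro z
    rw [mul_comm, Complex.mul_conj, Complex.normSq_eq_norm_sq]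
  have hhh : ⟪h, h⟫_ℂ = ((‖h‖^2 : ℝ) : ℂ) := by
    rw [inner_self_eq_norm_sq_to_K]; norm_cast
  have hDpos : (0:ℝ) < 1 + γ * ‖h‖ ^ 2 := by positivity
  have hDC : (1 + (γ : ℂ) * ((‖h‖ : ℂ)) ^ 2) = ((1 + γ * ‖h‖ ^ 2 : ℝ) : ℂ) := by
    push_cast; ring
  have hDCne : ((1 + γ * ‖h‖ ^ 2 : ℝ) : ℂ) ≠ 0 := by
    exact_mod_cast hDpos.ne'
  set c : ℂ := (γ : ℂ) * ⟪h, a⟫_ℂ / (1 + (γ : ℂ) * ((‖h‖ : ℂ)) ^ 2) with hcdef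
  set vstar : H := a - c • h with hvdef
  set δ : ℂ := ⟪h, vstar⟫_ℂ with hδdef
  -- δ in terms of a
  have hδa : δ = ⟪h, a⟫_ℂ - c * ((‖h‖^2 : ℝ) : ℂ) := by
    rw [hδdef, hvdef, inner_sub_right, inner_smul_right, hhh]
  have hca : (γ : ℂ) * ⟪h, a⟫_ℂ = c * ((1 + γ * ‖h‖ ^ 2 : ℝ) : ℂ) := by
    rw [hcdef, hDC, div_mul_cancel₀ _ hDCne]
  have hcδ : c = (γ : ℂ) * δ := by
    rw [hδa]
    push_cast at hca ⊢
    linear_combination -hca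
  have ha_eq : a = vstar + c • h := by rw [hvdef]; abel
  -- ⟪h, a⟫ = δ * D
  have hha : ⟪h, a⟫_ℂ = δ * ((1 + γ * ‖h‖ ^ 2 : ℝ) : ℂ) := by
    conv_lhs => rw [ha_eq]
    rw [inner_add_right, inner_smul_right, ← hδdef, hhh, hcδ]
    push_cast; ring
  have hnormδD : ‖⟪h, a⟫_ℂ‖ ^ 2 = ‖δ‖ ^ 2 * (1 + γ * ‖h‖ ^ 2) ^ 2 := by
    rw [hha, norm_mul, Complex.norm_real, Real.norm_eq_abs, abs_of_pos hDpos, mul_pow]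
  have hnormc : ‖c‖ = γ * ‖δ‖ := by
    rw [hcδ, norm_mul, Complex.norm_real, Real.norm_eq_abs, abs_of_nonneg hγ]
  -- ‖a‖² expansion
  have hre : RCLike.re ⟪vstar, c • h⟫_ℂ = γ * ‖δ‖ ^ 2 := by
    rw [inner_smul_right, ← inner_conj_symm vstar h, ← hδdef, hcδ]
    have : (γ:ℂ) * δ * (starRingEnd ℂ) δ = ((γ * ‖δ‖^2 : ℝ) : ℂ) := by
      rw [mul_assoc, mul_comm δ, hconj δ]; push_cast; ring
    rw [this]
    exact RCLike.ofReal_re _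
  have hna : ‖a‖ ^ 2 = ‖vstar‖ ^ 2 + 2 * (γ * ‖δ‖ ^ 2) + γ ^ 2 * ‖δ‖ ^ 2 * ‖h‖ ^ 2 := by
    conv_lhs => rw [ha_eq]
    rw [norm_add_sq (𝕜 := ℂ), hre, norm_smul, hnormc]
    ring
  have hM : ‖a‖ ^ 2 - γ * ‖⟪h, a⟫_ℂ‖ ^ 2 / (1 + γ * ‖h‖ ^ 2)
      = ‖vstar‖ ^ 2 + γ * ‖δ‖ ^ 2 := by
    rw [hna, hnormδD]
    field_simp
    ring
  -- key inequality for arbitrary v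
  have key : ∀ v : H, v ≠ 0 →
      ‖⟪a, v⟫_ℂ‖ ^ 2 / (γ * ‖⟪h, v⟫_ℂ‖ ^ 2 + ‖v‖ ^ 2)
        ≤ ‖vstar‖ ^ 2 + γ * ‖δ‖ ^ 2 := by
    intro v hv
    have hvn : (0:ℝ) < ‖v‖ := norm_pos_iff.mpr hv
    have hden : (0:ℝ) < γ * ‖⟪h, v⟫_ℂ‖ ^ 2 + ‖v‖ ^ 2 := by positivity
    rw [div_le_iff₀ hden]
    have hav : ⟪a, v⟫_ℂ = ⟪vstar, v⟫_ℂ + (starRingEnd ℂ) c * ⟪h, v⟫_ℂ := by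
      conv_lhs => rw [ha_eq]
      rw [inner_add_left, inner_smul_left]
    have h1 : ‖⟪vstar, v⟫_ℂ‖ ≤ ‖vstar‖ * ‖v‖ := norm_inner_le_norm _ _
    have h2 : ‖⟪a, v⟫_ℂ‖ ≤ ‖vstar‖ * ‖v‖ + γ * ‖δ‖ * ‖⟪h, v⟫_ℂ‖ := by
      rw [hav]
      calc ‖⟪vstar, v⟫_ℂ + (starRingEnd ℂ) c * ⟪h, v⟫_ℂ‖
          ≤ ‖⟪vstar, v⟫_ℂ‖ + ‖(starRingEnd ℂ) c * ⟪h, v⟫_ℂ‖ := norm_add_le _ _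
        _ = ‖⟪vstar, v⟫_ℂ‖ + ‖c‖ * ‖⟪h, v⟫_ℂ‖ := by
            rw [norm_mul, RCLike.norm_conj]
        _ ≤ ‖vstar‖ * ‖v‖ + γ * ‖δ‖ * ‖⟪h, v⟫_ℂ‖ := by
            rw [hnormc]; exact add_le_add_left h1 _
    have h3 : (0:ℝ) ≤ ‖⟪a, v⟫_ℂ‖ := norm_nonneg _
    have h4 : (0:ℝ) ≤ ‖vstar‖ * ‖v‖ + γ * ‖δ‖ * ‖⟪h, v⟫_ℂ‖ := le_trans h3 h2
    nlinarith [sq_nonneg (‖vstar‖ * ‖⟪h, v⟫_ℂ‖ - ‖δ‖ * ‖v‖),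
      mul_nonneg hγ (sq_nonneg (‖vstar‖ * ‖⟪h, v⟫_ℂ‖ - ‖δ‖ * ‖v‖)),
      norm_nonneg vstar, norm_nonneg v, norm_nonneg δ, norm_nonneg (⟪h, v⟫_ℂ),
      mul_nonneg hγ (norm_nonneg δ)]
  -- vstar ≠ 0
  have hvne : vstar ≠ 0 := by
    intro h0
    apply ha
    rw [ha_eq, h0, hcδ]
    have : δ = 0 := by rw [hδdef, h0, inner_zero_right]
    rw [this]
    simp
  -- value at vstar
  have hval : ‖⟪a, vstar⟫_ℂ‖ ^ 2 / (γ * ‖⟪h, vstar⟫_ℂ‖ ^ 2 + ‖vstar‖ ^ 2)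
      = ‖vstar‖ ^ 2 + γ * ‖δ‖ ^ 2 := by
    have havv : ⟪a, vstar⟫_ℂ = ((‖vstar‖ ^ 2 + γ * ‖δ‖ ^ 2 : ℝ) : ℂ) := by
      conv_lhs => rw [ha_eq]
      have hself : ⟪vstar, vstar⟫_ℂ = ((‖vstar‖ ^ 2 : ℝ) : ℂ) := by
        rw [inner_self_eq_norm_sq_to_K]; norm_cast
      rw [inner_add_left, inner_smul_left, ← hδdef, hself, hcδ]
      rw [map_mul]
      have : (starRingEnd ℂ) (γ:ℂ) * (starRingEnd ℂ) δ * δ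
          = ((γ * ‖δ‖^2 : ℝ) : ℂ) := by
        rw [mul_assoc, hconj δ, Complex.conj_ofReal]; push_cast; ring
      rw [this]
      exact (Complex.ofReal_add _ _).symm
    have hS : (0:ℝ) < ‖vstar‖ ^ 2 + γ * ‖δ‖ ^ 2 := by
      have := norm_pos_iff.mpr hvne
      positivity
    rw [havv, Complex.norm_real, Real.norm_eq_abs, abs_of_pos hS, ← hδdef]
    rw [show γ * ‖δ‖ ^ 2 + ‖vstar‖ ^ 2 = ‖vstar‖ ^ 2 + γ * ‖δ‖ ^ 2 by ring]
    rw [sq, mul_div_assoc, div_self hS.ne']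
    ring
  refine ⟨⟨⟨vstar, hvne, ?_⟩, ?_⟩, ?_⟩
  · rw [hval, hM]
  · rintro x ⟨v, hv, rfl⟩
    rw [hM]
    exact key v hv
  · show ‖⟪a, vstar⟫_ℂ‖ ^ 2 / (γ * ‖⟪h, vstar⟫_ℂ‖ ^ 2 + ‖vstar‖ ^ 2)
      = ‖a‖ ^ 2 - γ * ‖⟪h, a⟫_ℂ‖ ^ 2 / (1 + γ * ‖h‖ ^ 2)
    rw [hval, hM]
end

section
/- Let H be a complex inner product space, let a, h ∈ H with a ≠ 0, and let γ ≥ 0 be real. Then the supremum of |⟪a, v⟫|² / (γ·|⟪h, v⟫|² + ‖v‖²) over all nonzero v ∈ H equals the supremum of the same quantity over all nonzero v in the linear span of {a, h}. -/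
open scoped InnerProductSpace

/-- Subspace-reduction step for the uplink detector optimization: the supremum of the
generalized Rayleigh quotient `|⟪a,v⟫|² / (γ|⟪h,v⟫|² + ‖v‖²)` over all nonzero `v`
equals the supremum over all nonzero `v` in the span of `{a, h}`. -/
theorem rayleigh_sup_subspace_reduction {H : Type*} [NormedAddCommGroup H]
    [InnerProductSpace ℂ H] (a h : H) (ha : a ≠ 0) (γ : ℝ) (hγ : 0 ≤ γ) :
    sSup {x : ℝ | ∃ v : H, v ≠ 0 ∧
        x = ‖⟪a, v⟫_ℂ‖ ^ 2 / (γ * ‖⟪h, v⟫_ℂ‖ ^ 2 + ‖v‖ ^ 2)}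
      = sSup {x : ℝ | ∃ v ∈ Submodule.span ℂ ({a, h} : Set H), v ≠ 0 ∧
        x = ‖⟪a, v⟫_ℂ‖ ^ 2 / (γ * ‖⟪h, v⟫_ℂ‖ ^ 2 + ‖v‖ ^ 2)} := by
  set K : Submodule ℂ H := Submodule.span ℂ ({a, h} : Set H) with hK
  haveI : FiniteDimensional ℂ K :=
    FiniteDimensional.span_of_finite ℂ ((Set.finite_singleton h).insert a)
  haveI : CompleteSpace K := FiniteDimensional.complete ℂ K
  have hden : ∀ v : H, v ≠ 0 → 0 < γ * ‖⟪h, v⟫_ℂ‖ ^ 2 + ‖v‖ ^ 2 := by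
    intro v hv
    have h1 : 0 ≤ γ * ‖⟪h, v⟫_ℂ‖ ^ 2 := mul_nonneg hγ (by positivity)
    have h2 : 0 < ‖v‖ ^ 2 := pow_pos (norm_pos_iff.mpr hv) 2
    linarith
  have hbound : ∀ v : H, v ≠ 0 →
      ‖⟪a, v⟫_ℂ‖ ^ 2 / (γ * ‖⟪h, v⟫_ℂ‖ ^ 2 + ‖v‖ ^ 2) ≤ ‖a‖ ^ 2 := by
    intro v hv
    rw [div_le_iff₀ (hden v hv)]
    have hcs : ‖⟪a, v⟫_ℂ‖ ≤ ‖a‖ * ‖v‖ := norm_inner_le_norm a v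
    have h1 : ‖⟪a, v⟫_ℂ‖ ^ 2 ≤ (‖a‖ * ‖v‖) ^ 2 :=
      pow_le_pow_left₀ (norm_nonneg _) hcs 2
    have h2 : 0 ≤ γ * ‖⟪h, v⟫_ℂ‖ ^ 2 := mul_nonneg hγ (by positivity)
    have h3 : 0 ≤ ‖a‖ ^ 2 := by positivity
    nlinarith
  have haK : a ∈ K := Submodule.subset_span (by simp)
  have hS_bdd : BddAbove {x : ℝ | ∃ v ∈ K, v ≠ 0 ∧
      x = ‖⟪a, v⟫_ℂ‖ ^ 2 / (γ * ‖⟪h, v⟫_ℂ‖ ^ 2 + ‖v‖ ^ 2)} := by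
    refine ⟨‖a‖ ^ 2, ?_⟩
    rintro x ⟨v, _, hv, rfl⟩
    exact hbound v hv
  apply le_antisymm
  · -- sup over all v ≤ sup over span
    refine csSup_le ⟨_, ⟨a, ha, rfl⟩⟩ ?_
    rintro x ⟨v, hv, rfl⟩
    set w : H := (Submodule.orthogonalProjectionOnto K v : H) with hw
    have hwK : w ∈ K := (Submodule.orthogonalProjectionOnto K v).2
    have horth : v - w ∈ Kᗮ := K.sub_starProjection_mem_orthogonal v
    have hia : ⟪a, v⟫_ℂ = ⟪a, w⟫_ℂ := by
      have h0 : ⟪a, v - w⟫_ℂ = 0 :=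
        (Submodule.mem_orthogonal K (v - w)).mp horth a haK
      rw [inner_sub_right] at h0
      linear_combination h0
    have hih : ⟪h, v⟫_ℂ = ⟪h, w⟫_ℂ := by
      have hhK : h ∈ K := Submodule.subset_span (by simp)
      have h0 : ⟪h, v - w⟫_ℂ = 0 :=
        (Submodule.mem_orthogonal K (v - w)).mp horth h hhK
      rw [inner_sub_right] at h0
      linear_combination h0
    have hnorm : ‖w‖ ≤ ‖v‖ := by
      calc ‖w‖ ≤ ‖Submodule.orthogonalProjectionOnto K‖ * ‖v‖ :=
            (Submodule.orthogonalProjectionOnto K).le_opNorm v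
        _ ≤ 1 * ‖v‖ :=
            mul_le_mul_of_nonneg_right (Submodule.orthogonalProjectionOnto_norm_le K) (norm_nonneg v)
        _ = ‖v‖ := one_mul _
    rcases eq_or_ne w 0 with hw0 | hw0
    · -- projection zero: quotient is zero
      have : ⟪a, v⟫_ℂ = 0 := by rw [hia, hw0, inner_zero_right]
      rw [this]
      simp only [norm_zero, ne_eq, OfNat.ofNat_ne_zero, not_false_eq_true, zero_pow,
        zero_div]
      have hfa : (0:ℝ) ≤ ‖⟪a, a⟫_ℂ‖ ^ 2 / (γ * ‖⟪h, a⟫_ℂ‖ ^ 2 + ‖a‖ ^ 2) :=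
        div_nonneg (by positivity) (hden a ha).le
      exact le_trans hfa (le_csSup hS_bdd ⟨a, haK, ha, rfl⟩)
    · have hx : ‖⟪a, v⟫_ℂ‖ ^ 2 / (γ * ‖⟪h, v⟫_ℂ‖ ^ 2 + ‖v‖ ^ 2)
          ≤ ‖⟪a, w⟫_ℂ‖ ^ 2 / (γ * ‖⟪h, w⟫_ℂ‖ ^ 2 + ‖w‖ ^ 2) := by
        rw [hia, hih]
        apply div_le_div_of_nonneg_left (by positivity) (hden w hw0)
        have : ‖w‖ ^ 2 ≤ ‖v‖ ^ 2 := pow_le_pow_left₀ (norm_nonneg _) hnorm 2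
        linarith
      exact le_trans hx (le_csSup hS_bdd ⟨w, hwK, hw0, rfl⟩)
  · -- sup over span ≤ sup over all v
    refine csSup_le ⟨_, ⟨a, haK, ha, rfl⟩⟩ ?_
    rintro x ⟨v, _, hv, rfl⟩
    refine le_csSup ⟨‖a‖ ^ 2, ?_⟩ ⟨v, hv, rfl⟩
    rintro y ⟨u, hu, rfl⟩
    exact hbound u hu
end
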